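/- For every n ≥ 0, the identity ∑_{λ ⊢ n} ∑_{P ∈ SYT(λ)} t^{n(λ)} · ∏_{i=1}^{n} α_{P^{(i)}/P^{(i−1)}}(q,t) = 1 holds in ℚ(q,t), where the outer sum is over all partitions λ of n and the inner sum is over all standard Young tableaux of shape λ. -/

import Mathlib

open Finset

noncomputable section

/-- The field `ℚ(q,t)` of rational functions in two variables over `ℚ`. -/
abbrev K : Type := FractionRing (MvPolynomial (Fin 2) ℚ)

def q : K := algebraMap (MvPolynomial (Fin 2) ℚ) K (MvPolynomial.X 0)
def t : K := algebraMap (MvPolynomial (Fin 2) ℚ) K (MvPolynomial.X 1)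

/-- Arm-length of the cell `c = (row, col)` of `κ` (cells are 0-indexed, Mathlib convention). -/
def arm (κ : YoungDiagram) (c : ℕ × ℕ) : ℕ := κ.rowLen c.1 - c.2 - 1

/-- Leg-length of the cell `c = (row, col)` of `κ`. -/
def leg (κ : YoungDiagram) (c : ℕ × ℕ) : ℕ := κ.colLen c.2 - c.1 - 1

/-- Hook-length of the cell `c` of `κ`. -/
def hook (κ : YoungDiagram) (c : ℕ × ℕ) : ℕ := arm κ c + leg κ c + 1

/-- `Covers μ λ` means `μ ⋖ λ` in Young's lattice. -/
def Covers (μ l : YoungDiagram) : Prop :=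
  μ.cells ⊆ l.cells ∧ l.cells.card = μ.cells.card + 1

open scoped Classical in
/-- For `μ ⋖ λ`, the set `R_{λ/μ}` of cells of `μ` in the same row as the unique cell of `λ/μ`. -/
def Rset (μ l : YoungDiagram) : Finset (ℕ × ℕ) :=
  μ.cells.filter fun c => ∃ d ∈ l.cells \ μ.cells, c.1 = d.1

open scoped Classical in
/-- For `μ ⋖ λ`, the set `C_{λ/μ}` of cells of `μ` in the same column as the unique cell of `λ/μ`. -/
def Cset (μ l : YoungDiagram) : Finset (ℕ × ℕ) :=
  μ.cells.filter fun c => ∃ d ∈ l.cells \ μ.cells, c.2 = d.2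

/-- `[i,j] = 1 - q^i t^j`. -/
def brk (i j : ℕ) : K := 1 - q ^ i * t ^ j

/-- `b_κ(c) = (1 - q^{a} t^{ℓ+1})/(1 - q^{a+1} t^{ℓ})`. -/
def bcell (κ : YoungDiagram) (c : ℕ × ℕ) : K :=
  brk (arm κ c) (leg κ c + 1) / brk (arm κ c + 1) (leg κ c)

/-- `ψ_{λ/μ}(q,t)` for `μ ⋖ λ`. -/
def ψqt (μ l : YoungDiagram) : K := ∏ c ∈ Rset μ l, bcell μ c / bcell l c

/-- `φ_{λ/μ}(q,t)` for `μ ⋖ λ`. -/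
def φqt (μ l : YoungDiagram) : K :=
  ((1 - t) / (1 - q)) * ∏ c ∈ Cset μ l, bcell l c / bcell μ c

/-- `α_{ν/λ}(q,t)` for `λ ⋖ ν`. -/
def alph (l ν : YoungDiagram) : K :=
  (∏ c ∈ Rset l ν, brk (arm l c) (leg l c + 1) / brk (arm ν c) (leg ν c + 1)) *
  (∏ c ∈ Cset l ν, brk (arm l c + 1) (leg l c) / brk (arm ν c + 1) (leg ν c))

/-- `ᾱ_{ν/λ}(q,t)` for `λ ⋖ ν`. -/
def alphBar (l ν : YoungDiagram) : K :=
  (∏ c ∈ Rset l ν, brk (arm l c + 1) (leg l c) / brk (arm ν c + 1) (leg ν c)) *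
  (∏ c ∈ Cset l ν, brk (arm l c) (leg l c + 1) / brk (arm ν c) (leg ν c + 1))

/-- `n(κ) = ∑_{c ∈ κ} ℓ_κ(c)` (as an integer). -/
def nstat (κ : YoungDiagram) : ℤ := ∑ c ∈ κ.cells, (leg κ c : ℤ)

/-- `n'(κ) = ∑_{c ∈ κ} a_κ(c)` (as an integer). -/
def nstat' (κ : YoungDiagram) : ℤ := ∑ c ∈ κ.cells, (arm κ c : ℤ)


/-- `P : ℕ → YoungDiagram` encodes a standard Young tableau of shape `l ⊢ n`, viewed as a
saturated chain `∅ = P⁰ ⋖ P¹ ⋖ ⋯ ⋖ Pⁿ = l` in Young's lattice (padded constantly beyond `n`). -/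
def IsSYTChain (n : ℕ) (l : YoungDiagram) (P : ℕ → YoungDiagram) : Prop :=
  (P 0).cells = ∅ ∧ (∀ i < n, Covers (P i) (P (i + 1))) ∧ ∀ i, n ≤ i → P i = l
-- K facts
theorem q_ne_zero : q ≠ 0 := by
  simp only [q, ne_eq, map_eq_zero_iff _ (IsFractionRing.injective (MvPolynomial (Fin 2) ℚ) K)]
  exact MvPolynomial.X_ne_zero 0

theorem t_ne_zero : t ≠ 0 := by
  simp only [t, ne_eq, map_eq_zero_iff _ (IsFractionRing.injective (MvPolynomial (Fin 2) ℚ) K)]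
  exact MvPolynomial.X_ne_zero 1

theorem qt_mono_inj {a b c d : ℕ} (h : q ^ a * t ^ b = q ^ c * t ^ d) : a = c ∧ b = d := by
  have hinj := IsFractionRing.injective (MvPolynomial (Fin 2) ℚ) K
  have h2 : (algebraMap (MvPolynomial (Fin 2) ℚ) K)
      ((MvPolynomial.X 0) ^ a * (MvPolynomial.X 1) ^ b)
      = (algebraMap (MvPolynomial (Fin 2) ℚ) K) ((MvPolynomial.X 0) ^ c * (MvPolynomial.X 1) ^ d) := by
    simpa [map_mul, map_pow, q, t] using h
  have h3 : (MvPolynomial.X (R := ℚ) (0 : Fin 2)) ^ a * (MvPolynomial.X 1) ^ b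
      = (MvPolynomial.X 0) ^ c * (MvPolynomial.X 1) ^ d := hinj h2
  have e : ∀ (i j : ℕ), (MvPolynomial.X (R := ℚ) (0 : Fin 2)) ^ i * (MvPolynomial.X 1) ^ j
      = MvPolynomial.monomial (Finsupp.single 0 i + Finsupp.single 1 j) (1 : ℚ) := by
    intro i j
    rw [MvPolynomial.X_pow_eq_monomial, MvPolynomial.X_pow_eq_monomial,
      MvPolynomial.monomial_mul, one_mul]
  rw [e, e] at h3
  have h4 := (MvPolynomial.monomial_eq_monomial_iff _ _ _ _).mp h3
  rcases h4 with h4 | h4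
  · have h5 := h4.1
    constructor
    · have := DFunLike.congr_fun h5 (0 : Fin 2)
      simpa using this
    · have := DFunLike.congr_fun h5 (1 : Fin 2)
      simpa using this
  · exact absurd h4.1 one_ne_zero

theorem brk_ne_zero {i j : ℕ} (h : i ≠ 0 ∨ j ≠ 0) : brk i j ≠ 0 := by
  simp only [brk, ne_eq, sub_eq_zero]
  intro hc
  have : q ^ 0 * t ^ 0 = q ^ i * t ^ j := by simpa using hc
  rcases qt_mono_inj this with ⟨hi, hj⟩
  rcases h with h | h
  · exact h hi.symm
  · exact h hj.symm

/-- `q^a t^{-b}` as an element of `K`. -/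
def node (a b : ℕ) : K := q ^ a * (t ^ b)⁻¹

theorem node_ne_zero (a b : ℕ) : node a b ≠ 0 := by
  apply mul_ne_zero (pow_ne_zero _ q_ne_zero)
  exact inv_ne_zero (pow_ne_zero _ t_ne_zero)

theorem node_inj {a b c d : ℕ} (h : node a b = node c d) : a = c ∧ b = d := by
  have ht : (t:K) ^ b ≠ 0 := pow_ne_zero _ t_ne_zero
  have ht' : (t:K) ^ d ≠ 0 := pow_ne_zero _ t_ne_zero
  have : q ^ a * t ^ d = q ^ c * t ^ b := by
    rw [node, node] at h
    field_simp at h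
    linear_combination h
  have := qt_mono_inj this
  exact ⟨this.1, this.2.symm⟩
open Polynomial in
open scoped Classical in
theorem lagrange_key (s : Finset K) (B : Multiset K)
    (hcard : Multiset.card B + 1 = s.card)
    (hB0 : ∀ b ∈ B, b ≠ (0:K)) :
    ∑ a ∈ s, ((B.map (fun b => a - b)).prod * ∏ a' ∈ s.erase a, a') /
      ((∏ a' ∈ s.erase a, (a - a')) * B.prod) = 1 := by
  classical
  set m := Multiset.card B with hm
  set f : K[X] := (B.map (fun b => X - C b)).prod with hf
  have hmonic : f.Monic := by
    apply monic_multiset_prod_of_monic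
    intro b _
    exact monic_X_sub_C b
  have hdeg : f.natDegree = m := by
    rw [hf, natDegree_multiset_prod_of_monic]
    · simp [Multiset.map_map, Function.comp_def, hm]
    · intro p hp
      obtain ⟨b, _, rfl⟩ := Multiset.mem_map.mp hp
      exact monic_X_sub_C b
  have hdeglt : f.degree < (s.card : ℕ∞) := by
    rw [Polynomial.degree_eq_natDegree hmonic.ne_zero, hdeg]
    exact (WithBot.coe_lt_coe.mpr (show m < s.card by omega) : ((m : ℕ) : WithBot ℕ) < ((s.card : ℕ) : WithBot ℕ))
  have hinj : Set.InjOn (id : K → K) s := Function.injective_id.injOn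
  have hrepr := Lagrange.eq_interpolate (v := (id : K → K)) (f := f) hinj (by
    exact_mod_cast hdeglt)
  -- evaluate at 0
  have heval := congrArg (Polynomial.eval (0:K)) hrepr
  rw [Lagrange.interpolate_apply, eval_finset_sum] at heval
  have hfeval : ∀ x : K, f.eval x = (B.map (fun b => x - b)).prod := by
    intro x
    rw [hf, eval_multiset_prod, Multiset.map_map]
    congr 1
    ext b
    simp
  have hbasis : ∀ a ∈ s, (C (f.eval (id a)) * Lagrange.basis s id a).eval 0
      = (B.map (fun b => a - b)).prod * ((-1)^m * (∏ a' ∈ s.erase a, a') *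
        (∏ a' ∈ s.erase a, (a - a'))⁻¹) := by
    intro a ha
    rw [eval_mul, eval_C, hfeval, Lagrange.basis, eval_prod]
    congr 1
    have hcarde : (s.erase a).card = m := by
      rw [Finset.card_erase_of_mem ha, ← hcard]; simp
    calc ∏ a' ∈ s.erase a, (Lagrange.basisDivisor (id a) (id a')).eval 0
        = ∏ a' ∈ s.erase a, ((a - a')⁻¹ * (-a')) := by
          apply Finset.prod_congr rfl
          intro a' _
          simp [Lagrange.basisDivisor, mul_comm]
      _ = (∏ a' ∈ s.erase a, (a - a')⁻¹) * ∏ a' ∈ s.erase a, (-a') := by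
          rw [Finset.prod_mul_distrib]
      _ = _ := by
          have h1 : ∏ a' ∈ s.erase a, (-a') = (-1)^m * ∏ a' ∈ s.erase a, a' := by
            rw [show (fun a' : K => -a') = (fun a' : K => (-1) * a') by ext x; ring,
              Finset.prod_mul_distrib, Finset.prod_const, hcarde]
          rw [h1, ← Finset.prod_inv_distrib]
          ring
  have heval2 : f.eval 0 = (-1)^m * B.prod := by
    rw [hfeval]
    have : (B.map (fun b => (0:K) - b)) = B.map (fun b => -b) := by
      congr 1; ext b; simp
    rw [this]
    rw [show (B.map (fun b : K => -b)) = B.map (fun b => (-1) * b) by congr 1; ext b; ring]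
    rw [Multiset.prod_map_mul]
    simp [hm]
  rw [heval2] at heval
  have hsum : ∑ a ∈ s, (B.map (fun b => a - b)).prod * ((-1)^m * (∏ a' ∈ s.erase a, a') *
        (∏ a' ∈ s.erase a, (a - a'))⁻¹) = (-1)^m * B.prod := by
    rw [heval]
    apply Finset.sum_congr rfl
    intro a ha
    rw [hbasis a ha]
  have hBprod : B.prod ≠ 0 := by
    intro h
    exact hB0 0 (Multiset.prod_eq_zero_iff.mp h) rfl
  have hne1 : ((-1:K)^m) ≠ 0 := by
    apply pow_ne_zero; norm_num
  calc ∑ a ∈ s, ((B.map (fun b => a - b)).prod * ∏ a' ∈ s.erase a, a') /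
      ((∏ a' ∈ s.erase a, (a - a')) * B.prod)
      = ∑ a ∈ s, ((B.map (fun b => a - b)).prod * ((-1)^m * (∏ a' ∈ s.erase a, a') *
        (∏ a' ∈ s.erase a, (a - a'))⁻¹)) * ((-1)^m * B.prod)⁻¹ := by
        apply Finset.sum_congr rfl
        intro a _
        rw [show (Multiset.map (fun b => a - b) B).prod * ((-1)^m * (∏ a' ∈ s.erase a, a') *
            (∏ a' ∈ s.erase a, (a - a'))⁻¹) * ((-1)^m * B.prod)⁻¹
          = ((-1)^m * ((Multiset.map (fun b => a - b) B).prod * ∏ a' ∈ s.erase a, a')) /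
            ((-1)^m * ((∏ a' ∈ s.erase a, (a - a')) * B.prod)) by
            rw [div_eq_mul_inv, mul_inv, mul_inv, mul_inv]
            ring]
        rw [mul_div_mul_left _ _ hne1]
    _ = 1 := by
        rw [← Finset.sum_mul, hsum]
        field_simp
open YoungDiagram in
theorem lt_rowLen_iff (μ : YoungDiagram) {i j : ℕ} : j < μ.rowLen i ↔ (i, j) ∈ μ :=
  mem_iff_lt_rowLen.symm

open YoungDiagram in
theorem lt_colLen_iff (μ : YoungDiagram) {i j : ℕ} : i < μ.colLen j ↔ (i, j) ∈ μ :=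
  mem_iff_lt_colLen.symm

theorem nat_eq_of_lt_iff {m k : ℕ} (h : ∀ j, j < m ↔ j < k) : m = k := by
  rcases Nat.lt_trichotomy m k with hl | he | hg
  · exact absurd ((h m).mpr hl) (lt_irrefl m)
  · exact he
  · exact absurd ((h k).mp hg) (lt_irrefl k)

theorem rowLen_eq_of {ν : YoungDiagram} {i k : ℕ} (h : ∀ j, (i, j) ∈ ν ↔ j < k) :
    ν.rowLen i = k := by
  apply nat_eq_of_lt_iff
  intro j
  rw [lt_rowLen_iff, h]

theorem colLen_eq_of {ν : YoungDiagram} {j k : ℕ} (h : ∀ i, (i, j) ∈ ν ↔ i < k) :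
    ν.colLen j = k := by
  apply nat_eq_of_lt_iff
  intro i
  rw [lt_colLen_iff, h]

/-- Row `r` is an addable corner of `μ`. -/
def Addable (μ : YoungDiagram) (r : ℕ) : Prop :=
  r = 0 ∨ μ.rowLen r < μ.rowLen (r - 1)

theorem addable_zero (μ : YoungDiagram) : Addable μ 0 := Or.inl rfl

open scoped Classical in
/-- Add a cell at the end of row `r` (if row `r` is addable; otherwise `μ`). -/
def addCell (μ : YoungDiagram) (r : ℕ) : YoungDiagram :=
  if h : Addable μ r then
    { cells := insert (r, μ.rowLen r) μ.cells
      isLowerSet := by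
        intro a b hba ha
        simp only [Finset.coe_insert, Set.mem_insert_iff, YoungDiagram.mem_cells] at ha ⊢
        rcases ha with ha | ha
        · obtain ⟨i, j⟩ := b
          rw [ha] at hba
          have h1 : i ≤ r := hba.1
          have h2 : j ≤ μ.rowLen r := hba.2
          by_cases hij : i = r ∧ j = μ.rowLen r
          · left; simp [hij.1, hij.2]
          · right
            have : (i, j) ∈ μ := by
              rw [← lt_rowLen_iff]
              rcases Nat.lt_or_ge j (μ.rowLen r) with hj | hj
              · calc j < μ.rowLen r := hj
                  _ ≤ μ.rowLen i := μ.rowLen_anti i r h1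
              · have hj2 : j = μ.rowLen r := le_antisymm h2 hj
                have hi : i < r := by
                  rcases Nat.lt_or_ge i r with h' | h'
                  · exact h'
                  · exact absurd ⟨le_antisymm h1 h', hj2⟩ hij
                have hr0 : r ≠ 0 := by omega
                rcases h with h | h
                · exact absurd h hr0
                · calc j ≤ μ.rowLen r := hj2.le
                    _ < μ.rowLen (r - 1) := h
                    _ ≤ μ.rowLen i := μ.rowLen_anti i (r - 1) (by omega)
            simpa using this
        · right
          have : (↑(b.1, b.2) : ℕ × ℕ) ∈ μ := μ.isLowerSet hba (by simpa using ha)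
          simpa using this }
  else μ

theorem cells_addCell {μ : YoungDiagram} {r : ℕ} (h : Addable μ r) :
    (addCell μ r).cells = insert (r, μ.rowLen r) μ.cells := by
  rw [addCell, dif_pos h]

theorem mem_addCell {μ : YoungDiagram} {r : ℕ} (h : Addable μ r) {x : ℕ × ℕ} :
    x ∈ addCell μ r ↔ x = (r, μ.rowLen r) ∨ x ∈ μ := by
  rw [← YoungDiagram.mem_cells, cells_addCell h, Finset.mem_insert, YoungDiagram.mem_cells]

theorem corner_not_mem (μ : YoungDiagram) (r : ℕ) : (r, μ.rowLen r) ∉ μ := by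
  rw [← lt_rowLen_iff]
  omega

theorem card_addCell {μ : YoungDiagram} {r : ℕ} (h : Addable μ r) :
    (addCell μ r).cells.card = μ.cells.card + 1 := by
  rw [cells_addCell h, Finset.card_insert_of_notMem]
  rw [YoungDiagram.mem_cells]
  exact corner_not_mem μ r

theorem rowLen_addCell {μ : YoungDiagram} {r : ℕ} (h : Addable μ r) (i : ℕ) :
    (addCell μ r).rowLen i = if i = r then μ.rowLen r + 1 else μ.rowLen i := by
  apply rowLen_eq_of
  intro j
  rw [mem_addCell h]
  by_cases hi : i = r
  · subst hi
    rw [if_pos rfl]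
    simp only [Prod.mk.injEq, true_and]
    rw [← lt_rowLen_iff]
    omega
  · rw [if_neg hi]
    simp only [Prod.mk.injEq]
    rw [← lt_rowLen_iff]
    constructor
    · rintro (⟨h1, h2⟩ | h1)
      · exact absurd h1 hi
      · exact h1
    · intro h1; right; exact h1

theorem colLen_rowLen_of_addable {μ : YoungDiagram} {r : ℕ} (h : Addable μ r) :
    μ.colLen (μ.rowLen r) = r := by
  apply colLen_eq_of
  intro i
  constructor
  · intro hmem
    rw [← lt_rowLen_iff] at hmem
    by_contra hge
    push_neg at hge
    have := μ.rowLen_anti r i hge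
    omega
  · intro hi
    rw [← lt_rowLen_iff]
    have hr0 : r ≠ 0 := by omega
    rcases h with h | h
    · exact absurd h hr0
    · calc μ.rowLen r < μ.rowLen (r-1) := h
        _ ≤ μ.rowLen i := μ.rowLen_anti i (r-1) (by omega)

theorem colLen_addCell {μ : YoungDiagram} {r : ℕ} (h : Addable μ r) (j : ℕ) :
    (addCell μ r).colLen j = if j = μ.rowLen r then r + 1 else μ.colLen j := by
  apply colLen_eq_of
  intro i
  rw [mem_addCell h]
  by_cases hj : j = μ.rowLen r
  · subst hj
    rw [if_pos rfl]
    simp only [Prod.mk.injEq, and_true]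
    rw [← lt_colLen_iff, colLen_rowLen_of_addable h]
    omega
  · rw [if_neg hj]
    simp only [Prod.mk.injEq]
    rw [← lt_colLen_iff]
    constructor
    · rintro (⟨h1, h2⟩ | h1)
      · exact absurd h2 hj
      · exact h1
    · intro h1; right; exact h1

theorem covers_addCell {μ : YoungDiagram} {r : ℕ} (h : Addable μ r) :
    Covers μ (addCell μ r) := by
  constructor
  · rw [cells_addCell h]
    exact Finset.subset_insert _ _
  · exact card_addCell h

theorem covers_iff {μ ν : YoungDiagram} :
    Covers μ ν ↔ ∃ r, Addable μ r ∧ ν = addCell μ r := by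
  constructor
  · rintro ⟨hsub, hcard⟩
    have hsd : (ν.cells \ μ.cells).card = 1 := by
      rw [Finset.card_sdiff_of_subset hsub, hcard]; omega
    obtain ⟨d, hd⟩ := Finset.card_eq_one.mp hsd
    obtain ⟨r, c0⟩ := d
    have hdmem : (r, c0) ∈ ν.cells ∧ (r, c0) ∉ μ.cells := by
      have : (r, c0) ∈ ν.cells \ μ.cells := hd ▸ Finset.mem_singleton_self _
      exact ⟨(Finset.mem_sdiff.mp this).1, (Finset.mem_sdiff.mp this).2⟩
    have hother : ∀ x, x ∈ ν → x ≠ (r, c0) → x ∈ μ := by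
      intro x hx hne
      by_contra hxm
      have : x ∈ ν.cells \ μ.cells := Finset.mem_sdiff.mpr ⟨(YoungDiagram.mem_cells x).mpr hx,
        fun hc => hxm ((YoungDiagram.mem_cells x).mp hc)⟩
      rw [hd, Finset.mem_singleton] at this
      exact hne this
    have hrl : μ.rowLen r = c0 := by
      apply rowLen_eq_of
      intro j
      constructor
      · intro hj
        rcases Nat.lt_trichotomy j c0 with h' | h' | h'
        · exact h'
        · exact absurd ((YoungDiagram.mem_cells _).mpr hj) (h' ▸ hdmem.2)
        · exfalso
          have : (r, c0) ∈ μ := μ.isLowerSet (b := (r, c0)) ⟨le_refl r, h'.le⟩ hj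
          exact hdmem.2 ((YoungDiagram.mem_cells _).mpr this)
      · intro hj
        have h1 : (r, j) ∈ ν := ν.isLowerSet (b := (r, j)) ⟨le_refl r, hj.le⟩
          ((YoungDiagram.mem_cells _).mp hdmem.1)
        apply hother _ h1
        simp only [Prod.mk.injEq, ne_eq, not_and]
        intro _; omega
    have haddable : Addable μ r := by
      rcases Nat.eq_zero_or_pos r with h0 | h0
      · exact Or.inl h0
      · right
        have h1 : (r - 1, c0) ∈ ν := ν.isLowerSet (b := (r-1, c0)) ⟨by omega, le_refl c0⟩
          ((YoungDiagram.mem_cells _).mp hdmem.1)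
        have h2 : (r - 1, c0) ∈ μ := by
          apply hother _ h1
          simp only [Prod.mk.injEq, ne_eq, not_and]
          intro h; omega
        rw [← lt_rowLen_iff] at h2
        omega
    refine ⟨r, haddable, ?_⟩
    apply YoungDiagram.ext
    rw [cells_addCell haddable, hrl]
    ext x
    rw [Finset.mem_insert]
    constructor
    · intro hx
      by_cases hxe : x = (r, c0)
      · exact Or.inl hxe
      · exact Or.inr ((YoungDiagram.mem_cells _).mpr
          (hother x ((YoungDiagram.mem_cells _).mp hx) hxe))
    · rintro (rfl | hx)
      · exact hdmem.1
      · exact (YoungDiagram.mem_cells _).mpr (hsub hx)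
  · rintro ⟨r, h, rfl⟩
    exact covers_addCell h

theorem addCell_injective {μ : YoungDiagram} {r r' : ℕ} (h : Addable μ r) (h' : Addable μ r')
    (heq : addCell μ r = addCell μ r') : r = r' := by
  have h1 : (r, μ.rowLen r) ∈ addCell μ r' := by
    rw [← heq, mem_addCell h]; left; rfl
  rw [mem_addCell h'] at h1
  rcases h1 with h1 | h1
  · exact congrArg Prod.fst h1
  · exact absurd h1 (corner_not_mem μ r)

theorem addable_le {μ : YoungDiagram} {r : ℕ} (h : Addable μ r) : r ≤ μ.colLen 0 := by
  rcases h with h | h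
  · omega
  · have h1 : 0 < μ.rowLen (r - 1) := by omega
    have : (r - 1, 0) ∈ μ := by rw [← lt_rowLen_iff]; exact h1
    rw [← lt_colLen_iff] at this
    omega

open scoped Classical in
/-- The set of addable rows of `μ`. -/
def AddSet (μ : YoungDiagram) : Finset ℕ :=
  (Finset.range (μ.colLen 0 + 1)).filter fun r => Addable μ r

open scoped Classical in
/-- The set of removable-corner rows of `μ`. -/
def RemSet (μ : YoungDiagram) : Finset ℕ :=
  (Finset.range (μ.colLen 0)).filter fun y => μ.rowLen (y + 1) < μ.rowLen y

theorem mem_AddSet {μ : YoungDiagram} {r : ℕ} : r ∈ AddSet μ ↔ Addable μ r := by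
  rw [AddSet]
  classical
  rw [Finset.mem_filter, Finset.mem_range]
  constructor
  · exact fun h => h.2
  · intro h
    exact ⟨by have := addable_le h; omega, h⟩

theorem removable_lt {μ : YoungDiagram} {y : ℕ} (h : μ.rowLen (y + 1) < μ.rowLen y) :
    y < μ.colLen 0 := by
  have : (y, 0) ∈ μ := by rw [← lt_rowLen_iff]; omega
  rw [← lt_colLen_iff] at this
  exact this

theorem mem_RemSet {μ : YoungDiagram} {y : ℕ} :
    y ∈ RemSet μ ↔ μ.rowLen (y + 1) < μ.rowLen y := by
  rw [RemSet]
  classical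
  rw [Finset.mem_filter, Finset.mem_range]
  constructor
  · exact fun h => h.2
  · intro h
    exact ⟨removable_lt h, h⟩

theorem AddSet_eq_insert (μ : YoungDiagram) :
    AddSet μ = insert 0 ((RemSet μ).image (· + 1)) := by
  ext a
  rw [mem_AddSet, Finset.mem_insert]
  constructor
  · intro h
    rcases h with h | h
    · exact Or.inl h
    · rcases Nat.eq_zero_or_pos a with h0 | h0
      · exact Or.inl h0
      · right
        rw [Finset.mem_image]
        refine ⟨a - 1, ?_, by omega⟩
        rw [mem_RemSet]
        have : a - 1 + 1 = a := by omega
        rw [this]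
        exact h
  · rintro (rfl | h)
    · exact addable_zero μ
    · rw [Finset.mem_image] at h
      obtain ⟨y, hy, rfl⟩ := h
      rw [mem_RemSet] at hy
      right
      simpa using hy

theorem card_AddSet (μ : YoungDiagram) : (AddSet μ).card = (RemSet μ).card + 1 := by
  rw [AddSet_eq_insert, Finset.card_insert_of_notMem, Finset.card_image_of_injective]
  · exact fun a b => by omega
  · simp only [Finset.mem_image, not_exists]
    intro y _
    omega
open scoped Classical in
theorem telescope_prod (c : ℕ) (L : ℕ → ℕ) (D : ℕ → ℕ → K)
    (hanti : ∀ x y, x ≤ y → L y ≤ L x)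
    (hlast : 0 < c → L c < L (c - 1))
    (hnum : ∀ x, x < c → D (x + 1) (L x) ≠ 0) :
    (∏ x ∈ Finset.range c, D (x + 1) (L x)) / (∏ x ∈ Finset.range c, D x (L x)) =
    (∏ x ∈ (Finset.range c).filter (fun x => L (x + 1) < L x), D (x + 1) (L x)) /
    (∏ x ∈ (Finset.range c).filter (fun x => x = 0 ∨ L x < L (x - 1)), D x (L x)) := by
  rw [← Finset.prod_filter_mul_prod_filter_not (Finset.range c) (fun x => L (x + 1) < L x)
      (fun x => D (x + 1) (L x)),
    ← Finset.prod_filter_mul_prod_filter_not (Finset.range c) (fun x => x = 0 ∨ L x < L (x - 1))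
      (fun x => D x (L x))]
  have hbij : ∏ x ∈ (Finset.range c).filter (fun x => ¬ L (x + 1) < L x), D (x + 1) (L x)
      = ∏ x ∈ (Finset.range c).filter (fun x => ¬ (x = 0 ∨ L x < L (x - 1))), D x (L x) := by
    apply Finset.prod_nbij' (fun x => x + 1) (fun x => x - 1)
    · intro a ha
      simp only [Finset.mem_filter, Finset.mem_range, not_lt] at ha
      have hEq : L (a + 1) = L a := le_antisymm (hanti a (a + 1) (by omega)) ha.2
      have ha1 : a + 1 ≠ c := by
        intro hc
        have h2 := hlast (by omega)
        rw [hc] at hEq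
        have : c - 1 = a := by omega
        rw [this] at h2
        omega
      simp only [Finset.mem_filter, Finset.mem_range, not_or, not_lt]
      refine ⟨by omega, by omega, ?_⟩
      have : a + 1 - 1 = a := by omega
      rw [this, hEq]
    · intro b hb
      simp only [Finset.mem_filter, Finset.mem_range, not_or, not_lt] at hb
      obtain ⟨hblt, hb0, hble⟩ := hb
      simp only [Finset.mem_filter, Finset.mem_range, not_lt]
      have hb1 : b - 1 + 1 = b := by omega
      refine ⟨by omega, ?_⟩
      rw [hb1]
      exact hble
    · intro a _; omega
    · intro b hb
      simp only [Finset.mem_filter, Finset.mem_range, not_or, not_lt] at hb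
      omega
    · intro a ha
      simp only [Finset.mem_filter, Finset.mem_range, not_lt] at ha
      have hEq : L (a + 1) = L a := le_antisymm (hanti a (a + 1) (by omega)) ha.2
      rw [hEq]
  rw [hbij]
  have hBne : ∏ x ∈ (Finset.range c).filter (fun x => ¬ (x = 0 ∨ L x < L (x - 1))), D x (L x) ≠ 0 := by
    rw [← hbij]
    rw [Finset.prod_ne_zero_iff]
    intro a ha
    simp only [Finset.mem_filter, Finset.mem_range, not_lt] at ha
    have hEq : L (a + 1) = L a := le_antisymm (hanti a (a + 1) (by omega)) ha.2
    exact hnum a ha.1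
  exact mul_div_mul_right _ _ hBne

-- the cell added
theorem sdiff_addCell {μ : YoungDiagram} {r : ℕ} (h : Addable μ r) :
    (addCell μ r).cells \ μ.cells = {(r, μ.rowLen r)} := by
  rw [cells_addCell h]
  ext x
  simp only [Finset.mem_sdiff, Finset.mem_insert, Finset.mem_singleton]
  constructor
  · rintro ⟨hx | hx, hnx⟩
    · exact hx
    · exact absurd hx hnx
  · rintro rfl
    exact ⟨Or.inl rfl, by rw [YoungDiagram.mem_cells]; exact corner_not_mem μ r⟩

theorem Rset_addCell {μ : YoungDiagram} {r : ℕ} (h : Addable μ r) :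
    Rset μ (addCell μ r) = (Finset.range (μ.rowLen r)).image (fun x => (r, x)) := by
  have hpred : ∀ x : ℕ × ℕ, (∃ d ∈ (addCell μ r).cells \ μ.cells, x.1 = d.1) ↔ x.1 = r := by
    intro x
    rw [sdiff_addCell h]
    constructor
    · rintro ⟨d, hd, he⟩
      rw [Finset.mem_singleton] at hd
      rw [hd] at he
      exact he
    · intro he
      exact ⟨(r, μ.rowLen r), Finset.mem_singleton_self _, he⟩
  rw [Rset]
  ext x
  obtain ⟨i, j⟩ := x
  rw [Finset.mem_filter, hpred]
  simp only [Finset.mem_image, Finset.mem_range, YoungDiagram.mem_cells]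
  constructor
  · rintro ⟨hmem, rfl⟩
    rw [← lt_rowLen_iff] at hmem
    exact ⟨j, hmem, rfl⟩
  · rintro ⟨x, hx, hxe⟩
    have h1 : i = r := (congrArg Prod.fst hxe).symm
    have h2 : j = x := (congrArg Prod.snd hxe).symm
    subst h1; subst h2
    exact ⟨by rw [← lt_rowLen_iff]; exact hx, rfl⟩

theorem Cset_addCell {μ : YoungDiagram} {r : ℕ} (h : Addable μ r) :
    Cset μ (addCell μ r) = (Finset.range r).image (fun y => (y, μ.rowLen r)) := by
  have hpred : ∀ x : ℕ × ℕ, (∃ d ∈ (addCell μ r).cells \ μ.cells, x.2 = d.2) ↔ x.2 = μ.rowLen r := by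
    intro x
    rw [sdiff_addCell h]
    constructor
    · rintro ⟨d, hd, he⟩
      rw [Finset.mem_singleton] at hd
      rw [hd] at he
      exact he
    · intro he
      exact ⟨(r, μ.rowLen r), Finset.mem_singleton_self _, he⟩
  rw [Cset]
  ext x
  obtain ⟨i, j⟩ := x
  rw [Finset.mem_filter, hpred]
  simp only [Finset.mem_image, Finset.mem_range, YoungDiagram.mem_cells]
  constructor
  · rintro ⟨hmem, rfl⟩
    rw [← lt_colLen_iff, colLen_rowLen_of_addable h] at hmem
    exact ⟨i, hmem, rfl⟩
  · rintro ⟨y, hy, hye⟩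
    have h1 : i = y := (congrArg Prod.fst hye).symm
    have h2 : j = μ.rowLen r := (congrArg Prod.snd hye).symm
    subst h1; subst h2
    refine ⟨?_, rfl⟩
    rw [← lt_colLen_iff, colLen_rowLen_of_addable h]
    exact hy

theorem alph_addCell {μ : YoungDiagram} {r : ℕ} (h : Addable μ r) :
    alph μ (addCell μ r) =
      (∏ x ∈ Finset.range (μ.rowLen r),
        (brk (μ.rowLen r - x - 1) (μ.colLen x - r) / brk (μ.rowLen r - x) (μ.colLen x - r))) *
      (∏ y ∈ Finset.range r,
        (brk (μ.rowLen y - μ.rowLen r) (r - y - 1) / brk (μ.rowLen y - μ.rowLen r) (r - y))) := by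
  have hrowr : (addCell μ r).rowLen r = μ.rowLen r + 1 := by
    rw [rowLen_addCell h, if_pos rfl]
  have hcolc : (addCell μ r).colLen (μ.rowLen r) = r + 1 := by
    rw [colLen_addCell h, if_pos rfl]
  rw [alph, Rset_addCell h, Cset_addCell h]
  congr 1
  · rw [Finset.prod_image (by intro a _ b _ hab; exact (congrArg Prod.snd hab))]
    apply Finset.prod_congr rfl
    intro x hx
    rw [Finset.mem_range] at hx
    have hcol : r < μ.colLen x := by
      rw [lt_colLen_iff, ← lt_rowLen_iff]
      omega
    have hcolx : (addCell μ r).colLen x = μ.colLen x := by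
      rw [colLen_addCell h, if_neg (by omega)]
    have harm1 : arm μ (r, x) = μ.rowLen r - x - 1 := rfl
    have hleg1 : leg μ (r, x) + 1 = μ.colLen x - r := by
      simp only [leg]; omega
    have harm2 : arm (addCell μ r) (r, x) = μ.rowLen r - x := by
      simp only [arm, hrowr]; omega
    have hleg2 : leg (addCell μ r) (r, x) + 1 = μ.colLen x - r := by
      simp only [leg, hcolx]; omega
    rw [harm1, hleg1, harm2, hleg2]
  · rw [Finset.prod_image (by intro a _ b _ hab; exact (congrArg Prod.fst hab))]
    apply Finset.prod_congr rfl
    intro y hy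
    rw [Finset.mem_range] at hy
    have hrow : μ.rowLen r < μ.rowLen y := by
      rw [lt_rowLen_iff, ← lt_colLen_iff, colLen_rowLen_of_addable h]
      omega
    have hrowy : (addCell μ r).rowLen y = μ.rowLen y := by
      rw [rowLen_addCell h, if_neg (by omega)]
    have harm1 : arm μ (y, μ.rowLen r) + 1 = μ.rowLen y - μ.rowLen r := by
      simp only [arm]; omega
    have hleg1 : leg μ (y, μ.rowLen r) = r - y - 1 := by
      simp only [leg, colLen_rowLen_of_addable h]
    have harm2 : arm (addCell μ r) (y, μ.rowLen r) + 1 = μ.rowLen y - μ.rowLen r := by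
      simp only [arm, hrowy]; omega
    have hleg2 : leg (addCell μ r) (y, μ.rowLen r) = r - y := by
      simp only [leg, hcolc]; omega
    rw [harm1, hleg1, harm2, hleg2]
open scoped Classical in
theorem row_side {μ : YoungDiagram} {r : ℕ} (h : Addable μ r) :
    (∏ x ∈ Finset.range (μ.rowLen r),
        (brk (μ.rowLen r - x - 1) (μ.colLen x - r) / brk (μ.rowLen r - x) (μ.colLen x - r))) =
    (∏ y ∈ (RemSet μ).filter (fun y => r ≤ y), brk (μ.rowLen r - μ.rowLen y) (y + 1 - r)) /
    (∏ ρ ∈ (AddSet μ).filter (fun ρ => r < ρ), brk (μ.rowLen r - μ.rowLen ρ) (ρ - r)) := by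
  set c := μ.rowLen r with hc
  have hmemμ : ∀ x < c, r < μ.colLen x := by
    intro x hx
    rw [lt_colLen_iff, ← lt_rowLen_iff]
    omega
  rw [Finset.prod_div_distrib]
  have h1 : (∏ x ∈ Finset.range c, brk (c - x - 1) (μ.colLen x - r))
      = ∏ x ∈ Finset.range c, (fun x v => brk (c - x) (v - r)) (x + 1) (μ.colLen x) := by
    apply Finset.prod_congr rfl
    intro x _
    have : c - x - 1 = c - (x + 1) := by omega
    rw [this]
  have h2 : (∏ x ∈ Finset.range c, brk (c - x) (μ.colLen x - r))
      = ∏ x ∈ Finset.range c, (fun x v => brk (c - x) (v - r)) x (μ.colLen x) := rfl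
  rw [h1, h2, telescope_prod c μ.colLen (fun x v => brk (c - x) (v - r))
      (fun x y hxy => μ.colLen_anti x y hxy)
      (by
        intro hcpos
        have hcc : μ.colLen c = r := colLen_rowLen_of_addable h
        have : r < μ.colLen (c - 1) := hmemμ (c-1) (by omega)
        omega)
      (by
        intro x hx
        apply brk_ne_zero
        right
        have := hmemμ x hx
        omega)]
  congr 1
  · -- numerator bijection
    apply Finset.prod_nbij' (fun x => μ.colLen x - 1) (fun y => μ.rowLen y - 1)
    · intro x hx
      simp only [Finset.mem_filter, Finset.mem_range] at hx ⊢
      obtain ⟨hxc, hcorn⟩ := hx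
      have hcx : r < μ.colLen x := hmemμ x hxc
      have hry : x < μ.rowLen (μ.colLen x - 1) := by
        rw [lt_rowLen_iff, ← lt_colLen_iff]
        omega
      have hry2 : μ.rowLen (μ.colLen x - 1 + 1) ≤ x := by
        by_contra hcon
        push_neg at hcon
        rw [lt_rowLen_iff, ← lt_colLen_iff] at hcon
        omega
      refine ⟨mem_RemSet.mpr (by omega), by omega⟩
    · intro y hy
      simp only [Finset.mem_filter, Finset.mem_range] at hy ⊢
      obtain ⟨hyrem, hry⟩ := hy
      rw [mem_RemSet] at hyrem
      have hA1 : 1 ≤ μ.rowLen y := by omega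
      have hAc : μ.rowLen y ≤ c := hc ▸ μ.rowLen_anti r y hry
      have hcol1 : y < μ.colLen (μ.rowLen y - 1) := by
        rw [lt_colLen_iff, ← lt_rowLen_iff]
        omega
      have hcol2 : μ.colLen (μ.rowLen y - 1 + 1) ≤ y := by
        by_contra hcon
        push_neg at hcon
        rw [lt_colLen_iff, ← lt_rowLen_iff] at hcon
        omega
      have hcge : c ≤ μ.rowLen r := le_of_eq hc.symm
      constructor
      · -- μ.rowLen y - 1 < c
        have : μ.rowLen y - 1 < μ.rowLen y := by omega
        -- need rowLen y - 1 < c i.e. rowLen y ≤ c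
        omega
      · omega
    · intro x hx
      simp only [Finset.mem_filter, Finset.mem_range] at hx
      obtain ⟨hxc, hcorn⟩ := hx
      have hcx : r < μ.colLen x := hmemμ x hxc
      -- rowLen (colLen x - 1) = x + 1
      have hry : x < μ.rowLen (μ.colLen x - 1) := by
        rw [lt_rowLen_iff, ← lt_colLen_iff]; omega
      have hry2 : μ.rowLen (μ.colLen x - 1) ≤ x + 1 := by
        by_contra hcon
        push_neg at hcon
        rw [lt_rowLen_iff, ← lt_colLen_iff] at hcon
        omega
      omega
    · intro y hy
      simp only [Finset.mem_filter, Finset.mem_range] at hy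
      obtain ⟨hyrem, hry⟩ := hy
      rw [mem_RemSet] at hyrem
      have hcol1 : y < μ.colLen (μ.rowLen y - 1) := by
        rw [lt_colLen_iff, ← lt_rowLen_iff]; omega
      have hcol2 : μ.colLen (μ.rowLen y - 1) ≤ y + 1 := by
        by_contra hcon
        push_neg at hcon
        rw [lt_colLen_iff, ← lt_rowLen_iff] at hcon
        omega
      omega
    · intro x hx
      simp only [Finset.mem_filter, Finset.mem_range] at hx
      obtain ⟨hxc, hcorn⟩ := hx
      have hcx : r < μ.colLen x := hmemμ x hxc
      have hry : x < μ.rowLen (μ.colLen x - 1) := by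
        rw [lt_rowLen_iff, ← lt_colLen_iff]; omega
      have hry2 : μ.rowLen (μ.colLen x - 1) ≤ x + 1 := by
        by_contra hcon
        push_neg at hcon
        rw [lt_rowLen_iff, ← lt_colLen_iff] at hcon
        omega
      have hA : μ.rowLen (μ.colLen x - 1) = x + 1 := by omega
      simp only [hA]
      congr 1
      omega
  · -- denominator bijection
    apply Finset.prod_nbij' (fun x => μ.colLen x) (fun ρ => μ.rowLen ρ)
    · intro x hx
      simp only [Finset.mem_filter, Finset.mem_range] at hx ⊢
      obtain ⟨hxc, hpred⟩ := hx
      have hcx : r < μ.colLen x := hmemμ x hxc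
      refine ⟨mem_AddSet.mpr ?_, hcx⟩
      right
      have hup : μ.rowLen (μ.colLen x) ≤ x := by
        by_contra hcon
        push_neg at hcon
        rw [lt_rowLen_iff, ← lt_colLen_iff] at hcon
        omega
      rcases hpred with h0 | hlt
      · -- x = 0 : rowLen (colLen 0 - 1) ≥ 1 > rowLen (colLen 0)
        subst h0
        have : 0 < μ.rowLen (μ.colLen 0 - 1) := by
          rw [lt_rowLen_iff, ← lt_colLen_iff]
          omega
        omega
      · have : x < μ.rowLen (μ.colLen x - 1) := by
          rw [lt_rowLen_iff, ← lt_colLen_iff]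
          omega
        omega
    · intro ρ hρ
      simp only [Finset.mem_filter, Finset.mem_range] at hρ ⊢
      obtain ⟨hρa, hρr⟩ := hρ
      rw [mem_AddSet] at hρa
      have hAle : μ.rowLen ρ ≤ c := hc ▸ μ.rowLen_anti r ρ hρr.le
      -- rowLen ρ < c
      have hlt : μ.rowLen ρ < c := by
        rcases Nat.lt_or_ge (μ.rowLen ρ) c with h' | h'
        · exact h'
        · exfalso
          have hAeq : μ.rowLen ρ = c := by omega
          rcases hρa with h0 | hab
          · omega
          · have : μ.rowLen (ρ - 1) ≤ μ.rowLen r := μ.rowLen_anti r (ρ-1) (by omega)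
            omega
      refine ⟨hlt, ?_⟩
      rcases Nat.eq_zero_or_pos (μ.rowLen ρ) with h0 | hpos
      · left; exact h0
      · right
        have h1 : μ.colLen (μ.rowLen ρ) ≤ ρ := by
          by_contra hcon
          push_neg at hcon
          rw [lt_colLen_iff, ← lt_rowLen_iff] at hcon
          omega
        have h2 : ρ < μ.colLen (μ.rowLen ρ - 1) := by
          rw [lt_colLen_iff, ← lt_rowLen_iff]
          omega
        omega
    · intro x hx
      simp only [Finset.mem_filter, Finset.mem_range] at hx
      obtain ⟨hxc, hpred⟩ := hx
      have hcx : r < μ.colLen x := hmemμ x hxc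
      have hup : μ.rowLen (μ.colLen x) ≤ x := by
        by_contra hcon
        push_neg at hcon
        rw [lt_rowLen_iff, ← lt_colLen_iff] at hcon
        omega
      rcases hpred with h0 | hlt
      · omega
      · have : x - 1 < μ.rowLen (μ.colLen x) := by
          rw [lt_rowLen_iff, ← lt_colLen_iff]
          omega
        omega
    · intro ρ hρ
      simp only [Finset.mem_filter, Finset.mem_range] at hρ
      obtain ⟨hρa, hρr⟩ := hρ
      rw [mem_AddSet] at hρa
      exact colLen_rowLen_of_addable hρa
    · intro x hx
      simp only [Finset.mem_filter, Finset.mem_range] at hx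
      obtain ⟨hxc, hpred⟩ := hx
      have hcx : r < μ.colLen x := hmemμ x hxc
      have hup : μ.rowLen (μ.colLen x) ≤ x := by
        by_contra hcon
        push_neg at hcon
        rw [lt_rowLen_iff, ← lt_colLen_iff] at hcon
        omega
      have hA : μ.rowLen (μ.colLen x) = x := by
        rcases hpred with h0 | hlt
        · omega
        · have : x - 1 < μ.rowLen (μ.colLen x) := by
            rw [lt_rowLen_iff, ← lt_colLen_iff]
            omega
          omega
      rw [hA]
open scoped Classical in
theorem col_filter_corner (μ : YoungDiagram) (r : ℕ) :
    (Finset.range r).filter (fun y => μ.rowLen (y + 1) < μ.rowLen y)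
      = (RemSet μ).filter (fun y => y < r) := by
  ext y
  simp only [Finset.mem_filter, Finset.mem_range, mem_RemSet]
  tauto

open scoped Classical in
theorem col_filter_keep (μ : YoungDiagram) (r : ℕ) :
    (Finset.range r).filter (fun y => y = 0 ∨ μ.rowLen y < μ.rowLen (y - 1))
      = (AddSet μ).filter (fun ρ => ρ < r) := by
  ext y
  simp only [Finset.mem_filter, Finset.mem_range, mem_AddSet, Addable]
  tauto

open scoped Classical in
theorem col_side {μ : YoungDiagram} {r : ℕ} (h : Addable μ r) :
    (∏ y ∈ Finset.range r,
        (brk (μ.rowLen y - μ.rowLen r) (r - y - 1) / brk (μ.rowLen y - μ.rowLen r) (r - y))) =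
    (∏ y ∈ (RemSet μ).filter (fun y => y < r), brk (μ.rowLen y - μ.rowLen r) (r - (y + 1))) /
    (∏ ρ ∈ (AddSet μ).filter (fun ρ => ρ < r), brk (μ.rowLen ρ - μ.rowLen r) (r - ρ)) := by
  set c := μ.rowLen r with hc
  have hrow : ∀ y < r, c < μ.rowLen y := by
    intro y hy
    have hr0 : r ≠ 0 := by omega
    rcases h with h' | h'
    · exact absurd h' hr0
    · calc c < μ.rowLen (r - 1) := h'
        _ ≤ μ.rowLen y := μ.rowLen_anti y (r-1) (by omega)
  rw [Finset.prod_div_distrib]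
  have h1 : (∏ y ∈ Finset.range r, brk (μ.rowLen y - c) (r - y - 1))
      = ∏ y ∈ Finset.range r, (fun y v => brk (v - c) (r - y)) (y + 1) (μ.rowLen y) := by
    apply Finset.prod_congr rfl
    intro y _
    have : r - y - 1 = r - (y + 1) := by omega
    rw [this]
  have h2 : (∏ y ∈ Finset.range r, brk (μ.rowLen y - c) (r - y))
      = ∏ y ∈ Finset.range r, (fun y v => brk (v - c) (r - y)) y (μ.rowLen y) := rfl
  rw [h1, h2, telescope_prod r μ.rowLen (fun y v => brk (v - c) (r - y))
      (fun x y hxy => μ.rowLen_anti x y hxy)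
      (by
        intro hrpos
        rcases h with h' | h'
        · omega
        · exact h')
      (by
        intro y hy
        apply brk_ne_zero
        left
        have := hrow y hy
        omega)]
  rw [col_filter_corner μ r, col_filter_keep μ r]
theorem brk_node {a a' b b' : ℕ} (ha : a' ≤ a) (hb : b ≤ b') :
    brk (a - a') (b' - b) = 1 - node a b / node a' b' := by
  rw [brk, node, node]
  congr 1
  rw [pow_sub₀ q q_ne_zero ha, pow_sub₀ t t_ne_zero hb]
  have h1 : (t:K) ^ b ≠ 0 := pow_ne_zero _ t_ne_zero
  have h2 : (t:K) ^ b' ≠ 0 := pow_ne_zero _ t_ne_zero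
  have h3 : (q:K) ^ a' ≠ 0 := pow_ne_zero _ q_ne_zero
  field_simp

theorem node_succ_div (a b : ℕ) : node a (b + 1) / node a b = (t : K)⁻¹ := by
  have h1 : (t:K) ^ b ≠ 0 := pow_ne_zero _ t_ne_zero
  have h3 : (q:K) ^ a ≠ 0 := pow_ne_zero _ q_ne_zero
  have key : node a (b + 1) * t = node a b := by
    rw [node, node, pow_succ, mul_inv, ← mul_assoc, mul_assoc,
      inv_mul_cancel₀ t_ne_zero, mul_one]
  rw [div_eq_iff (node_ne_zero a b), ← key, mul_comm (node a (b + 1)) t, ← mul_assoc,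
    inv_mul_cancel₀ t_ne_zero, one_mul]

open scoped Classical in
theorem card_GE (μ : YoungDiagram) (r : ℕ) :
    ((RemSet μ).filter (fun y => r ≤ y)).card = ((AddSet μ).filter (fun ρ => r < ρ)).card := by
  have himg : ((RemSet μ).filter (fun y => r ≤ y)).image (· + 1)
      = (AddSet μ).filter (fun ρ => r < ρ) := by
    ext a
    simp only [Finset.mem_image, Finset.mem_filter, mem_RemSet, mem_AddSet]
    constructor
    · rintro ⟨y, ⟨hrem, hry⟩, rfl⟩
      refine ⟨Or.inr ?_, by omega⟩
      simpa using hrem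
    · rintro ⟨hadd, hra⟩
      refine ⟨a - 1, ⟨?_, by omega⟩, by omega⟩
      rcases hadd with h0 | hlt
      · omega
      · have : a - 1 + 1 = a := by omega
        rw [this]
        exact hlt
  rw [← himg, Finset.card_image_of_injective _ (fun x y => by omega)]

open scoped Classical in
theorem card_LT {μ : YoungDiagram} {r : ℕ} (h : Addable μ r) :
    ((RemSet μ).filter (fun y => y < r)).card = ((AddSet μ).filter (fun ρ => ρ < r)).card := by
  rcases Nat.eq_zero_or_pos r with rfl | hr
  · rw [Finset.filter_false_of_mem (by omega), Finset.filter_false_of_mem (by omega)]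
  · have hrem : r - 1 ∈ RemSet μ := by
      rw [mem_RemSet]
      have : r - 1 + 1 = r := by omega
      rw [this]
      rcases h with h0 | hlt
      · omega
      · exact hlt
    have h1 : (RemSet μ).filter (fun y => y < r)
        = insert (r - 1) ((RemSet μ).filter (fun y => y < r - 1)) := by
      ext y
      simp only [Finset.mem_insert, Finset.mem_filter]
      constructor
      · rintro ⟨hy, hyr⟩
        rcases Nat.lt_or_ge y (r-1) with h' | h'
        · exact Or.inr ⟨hy, h'⟩
        · left; omega
      · rintro (rfl | ⟨hy, hyr⟩)
        · exact ⟨hrem, by omega⟩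
        · exact ⟨hy, by omega⟩
    have h2 : (AddSet μ).filter (fun ρ => ρ < r)
        = insert 0 (((RemSet μ).filter (fun y => y < r - 1)).image (· + 1)) := by
      ext ρ
      simp only [Finset.mem_insert, Finset.mem_filter, Finset.mem_image, mem_AddSet, mem_RemSet]
      constructor
      · rintro ⟨hadd, hρr⟩
        rcases Nat.eq_zero_or_pos ρ with rfl | hρ
        · exact Or.inl rfl
        · right
          refine ⟨ρ - 1, ⟨?_, by omega⟩, by omega⟩
          rcases hadd with h0 | hlt
          · omega
          · have : ρ - 1 + 1 = ρ := by omega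
            rw [this]
            exact hlt
      · rintro (rfl | ⟨y, ⟨hy, hyr⟩, rfl⟩)
        · exact ⟨addable_zero μ, hr⟩
        · refine ⟨Or.inr ?_, by omega⟩
          simpa using hy
    rw [h1, h2, Finset.card_insert_of_notMem (by simp), Finset.card_insert_of_notMem (by
        simp only [Finset.mem_image, Finset.mem_filter]
        rintro ⟨y, _, hcon⟩
        omega),
      Finset.card_image_of_injective _ (fun x y => by omega)]

open scoped Classical in
theorem tpow_prod {μ : YoungDiagram} {r : ℕ} (h : Addable μ r) :
    ∏ ρ ∈ (AddSet μ).filter (fun ρ => ρ < r), node (μ.rowLen ρ) ρ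
      = t ^ (r:ℕ) * ∏ y ∈ (RemSet μ).filter (fun y => y < r), node (μ.rowLen y) (y + 1) := by
  have htel := telescope_prod r μ.rowLen (fun y v => node v y)
      (fun x y hxy => μ.rowLen_anti x y hxy)
      (by
        intro hrpos
        rcases h with h' | h'
        · omega
        · exact h')
      (fun y _ => node_ne_zero _ _)
  rw [col_filter_corner μ r, col_filter_keep μ r] at htel
  have hlhs : (∏ y ∈ Finset.range r, node (μ.rowLen y) (y + 1)) /
      (∏ y ∈ Finset.range r, node (μ.rowLen y) y) = ((t:K)⁻¹) ^ r := by
    rw [← Finset.prod_div_distrib]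
    rw [Finset.prod_congr rfl (fun y _ => node_succ_div (μ.rowLen y) y)]
    rw [Finset.prod_const, Finset.card_range]
  rw [hlhs] at htel
  have hP : ∏ y ∈ (RemSet μ).filter (fun y => y < r), node (μ.rowLen y) (y + 1) ≠ 0 := by
    rw [Finset.prod_ne_zero_iff]
    exact fun y _ => node_ne_zero _ _
  have hQ : ∏ ρ ∈ (AddSet μ).filter (fun ρ => ρ < r), node (μ.rowLen ρ) ρ ≠ 0 := by
    rw [Finset.prod_ne_zero_iff]
    exact fun y _ => node_ne_zero _ _
  have ht : (t:K) ^ r ≠ 0 := pow_ne_zero _ t_ne_zero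
  rw [eq_comm, div_eq_iff hQ] at htel
  have htel' : ∏ y ∈ (RemSet μ).filter (fun y => y < r), node (μ.rowLen y) (y + 1)
      = ((t:K)⁻¹) ^ r * ∏ ρ ∈ (AddSet μ).filter (fun ρ => ρ < r), node (μ.rowLen ρ) ρ := htel
  rw [htel', ← mul_assoc]
  rw [show (t:K)^r * ((t:K)⁻¹)^r = 1 by
    rw [← mul_pow, mul_inv_cancel₀ t_ne_zero, one_pow]]
  rw [one_mul]

theorem prod_split_lt (s : Finset ℕ) (r : ℕ) (f : ℕ → K) [DecidablePred (fun x => x < r)]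
    [DecidablePred (fun x => r ≤ x)] :
    ∏ x ∈ s, f x = (∏ x ∈ s.filter (fun x => x < r), f x) * ∏ x ∈ s.filter (fun x => r ≤ x), f x := by
  classical
  rw [← Finset.prod_filter_mul_prod_filter_not s (fun x => x < r)]
  congr 1
  apply Finset.prod_congr _ (fun _ _ => rfl)
  apply Finset.filter_congr
  intro x _
  simp [not_lt]
open scoped Classical in
theorem talph {μ : YoungDiagram} {r : ℕ} (h : Addable μ r) :
    t ^ r * alph μ (addCell μ r) =
      ((∏ y ∈ RemSet μ, (node (μ.rowLen r) r - node (μ.rowLen y) (y + 1))) *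
        ∏ ρ ∈ (AddSet μ).erase r, node (μ.rowLen ρ) ρ) /
      ((∏ ρ ∈ (AddSet μ).erase r, (node (μ.rowLen r) r - node (μ.rowLen ρ) ρ)) *
        ∏ y ∈ RemSet μ, node (μ.rowLen y) (y + 1)) := by
  classical
  rw [alph_addCell h, row_side h, col_side h]
  have hrowlt : ∀ y, y < r → μ.rowLen r < μ.rowLen y := by
    intro y hy
    rcases h with h' | h'
    · omega
    · calc μ.rowLen r < μ.rowLen (r - 1) := h'
        _ ≤ μ.rowLen y := μ.rowLen_anti y (r - 1) (by omega)
  have hRN : ∏ y ∈ (RemSet μ).filter (fun y => r ≤ y), brk (μ.rowLen r - μ.rowLen y) (y + 1 - r)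
      = (∏ y ∈ (RemSet μ).filter (fun y => r ≤ y),
          (node (μ.rowLen y) (y + 1) - node (μ.rowLen r) r))
        * (∏ y ∈ (RemSet μ).filter (fun y => r ≤ y), node (μ.rowLen y) (y + 1))⁻¹ := by
    rw [← Finset.prod_inv_distrib, ← Finset.prod_mul_distrib]
    apply Finset.prod_congr rfl
    intro y hy
    simp only [Finset.mem_filter, mem_RemSet] at hy
    rw [brk_node (μ.rowLen_anti r y hy.2) (by omega : r ≤ y + 1)]
    have hb := node_ne_zero (μ.rowLen y) (y + 1)
    field_simp
  have hRD : ∏ ρ ∈ (AddSet μ).filter (fun ρ => r < ρ), brk (μ.rowLen r - μ.rowLen ρ) (ρ - r)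
      = (∏ ρ ∈ (AddSet μ).filter (fun ρ => r < ρ),
          (node (μ.rowLen ρ) ρ - node (μ.rowLen r) r))
        * (∏ ρ ∈ (AddSet μ).filter (fun ρ => r < ρ), node (μ.rowLen ρ) ρ)⁻¹ := by
    rw [← Finset.prod_inv_distrib, ← Finset.prod_mul_distrib]
    apply Finset.prod_congr rfl
    intro ρ hρ
    simp only [Finset.mem_filter, mem_AddSet] at hρ
    rw [brk_node (μ.rowLen_anti r ρ hρ.2.le) (hρ.2.le : r ≤ ρ)]
    have hb := node_ne_zero (μ.rowLen ρ) ρ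
    field_simp
  have hCN : ∏ y ∈ (RemSet μ).filter (fun y => y < r), brk (μ.rowLen y - μ.rowLen r) (r - (y + 1))
      = (∏ y ∈ (RemSet μ).filter (fun y => y < r),
          (node (μ.rowLen r) r - node (μ.rowLen y) (y + 1)))
        * ((node (μ.rowLen r) r)⁻¹) ^ ((RemSet μ).filter (fun y => y < r)).card := by
    rw [← Finset.prod_const, ← Finset.prod_mul_distrib]
    apply Finset.prod_congr rfl
    intro y hy
    simp only [Finset.mem_filter, mem_RemSet] at hy
    rw [brk_node (hrowlt y hy.2).le (by omega : y + 1 ≤ r)]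
    have hb := node_ne_zero (μ.rowLen r) r
    field_simp
  have hCD : ∏ ρ ∈ (AddSet μ).filter (fun ρ => ρ < r), brk (μ.rowLen ρ - μ.rowLen r) (r - ρ)
      = (∏ ρ ∈ (AddSet μ).filter (fun ρ => ρ < r),
          (node (μ.rowLen r) r - node (μ.rowLen ρ) ρ))
        * ((node (μ.rowLen r) r)⁻¹) ^ ((AddSet μ).filter (fun ρ => ρ < r)).card := by
    rw [← Finset.prod_const, ← Finset.prod_mul_distrib]
    apply Finset.prod_congr rfl
    intro ρ hρ
    simp only [Finset.mem_filter, mem_AddSet] at hρ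
    rw [brk_node (hrowlt ρ hρ.2).le (hρ.2.le : ρ ≤ r)]
    have hb := node_ne_zero (μ.rowLen r) r
    field_simp
  have hsgn1 : ∏ y ∈ (RemSet μ).filter (fun y => r ≤ y),
        (node (μ.rowLen y) (y + 1) - node (μ.rowLen r) r)
      = (-1 : K) ^ ((RemSet μ).filter (fun y => r ≤ y)).card *
        ∏ y ∈ (RemSet μ).filter (fun y => r ≤ y),
          (node (μ.rowLen r) r - node (μ.rowLen y) (y + 1)) := by
    rw [← Finset.prod_const, ← Finset.prod_mul_distrib]
    apply Finset.prod_congr rfl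
    intro y _
    ring
  have hsgn2 : ∏ ρ ∈ (AddSet μ).filter (fun ρ => r < ρ),
        (node (μ.rowLen ρ) ρ - node (μ.rowLen r) r)
      = (-1 : K) ^ ((AddSet μ).filter (fun ρ => r < ρ)).card *
        ∏ ρ ∈ (AddSet μ).filter (fun ρ => r < ρ),
          (node (μ.rowLen r) r - node (μ.rowLen ρ) ρ) := by
    rw [← Finset.prod_const, ← Finset.prod_mul_distrib]
    apply Finset.prod_congr rfl
    intro ρ _
    ring
  have e1 : ((AddSet μ).erase r).filter (fun x => x < r) = (AddSet μ).filter (fun x => x < r) := by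
    ext x
    simp only [Finset.mem_filter, Finset.mem_erase]
    constructor
    · rintro ⟨⟨_, hx⟩, hxr⟩; exact ⟨hx, hxr⟩
    · rintro ⟨hx, hxr⟩; exact ⟨⟨by omega, hx⟩, hxr⟩
  have e2 : ((AddSet μ).erase r).filter (fun x => r ≤ x) = (AddSet μ).filter (fun x => r < x) := by
    ext x
    simp only [Finset.mem_filter, Finset.mem_erase]
    constructor
    · rintro ⟨⟨hne, hx⟩, hxr⟩; exact ⟨hx, by omega⟩
    · rintro ⟨hx, hxr⟩; exact ⟨⟨by omega, hx⟩, by omega⟩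
  rw [hRN, hRD, hCN, hCD, hsgn1, hsgn2,
    prod_split_lt (RemSet μ) r (fun y => node (μ.rowLen r) r - node (μ.rowLen y) (y + 1)),
    prod_split_lt (RemSet μ) r (fun y => node (μ.rowLen y) (y + 1)),
    prod_split_lt ((AddSet μ).erase r) r (fun ρ => node (μ.rowLen ρ) ρ),
    prod_split_lt ((AddSet μ).erase r) r
      (fun ρ => node (μ.rowLen r) r - node (μ.rowLen ρ) ρ),
    e1, e2, card_GE μ r, card_LT h, tpow_prod h]
  -- now pure field algebra
  have hk := ((AddSet μ).filter (fun ρ => r < ρ)).card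
  have ha0 : node (μ.rowLen r) r ≠ 0 := node_ne_zero _ _
  have hB1 : ∏ y ∈ (RemSet μ).filter (fun y => r ≤ y), node (μ.rowLen y) (y + 1) ≠ 0 :=
    Finset.prod_ne_zero_iff.mpr fun y _ => node_ne_zero _ _
  have hB2 : ∏ y ∈ (RemSet μ).filter (fun y => y < r), node (μ.rowLen y) (y + 1) ≠ 0 :=
    Finset.prod_ne_zero_iff.mpr fun y _ => node_ne_zero _ _
  have hD1 : ∏ ρ ∈ (AddSet μ).filter (fun ρ => r < ρ), node (μ.rowLen ρ) ρ ≠ 0 :=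
    Finset.prod_ne_zero_iff.mpr fun y _ => node_ne_zero _ _
  have hC1 : ∏ ρ ∈ (AddSet μ).filter (fun ρ => r < ρ),
      (node (μ.rowLen r) r - node (μ.rowLen ρ) ρ) ≠ 0 := by
    apply Finset.prod_ne_zero_iff.mpr
    intro ρ hρ
    simp only [Finset.mem_filter] at hρ
    apply sub_ne_zero_of_ne
    intro hcon
    have := (node_inj hcon).2
    omega
  have hC2 : ∏ ρ ∈ (AddSet μ).filter (fun ρ => ρ < r),
      (node (μ.rowLen r) r - node (μ.rowLen ρ) ρ) ≠ 0 := by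
    apply Finset.prod_ne_zero_iff.mpr
    intro ρ hρ
    simp only [Finset.mem_filter] at hρ
    apply sub_ne_zero_of_ne
    intro hcon
    have := (node_inj hcon).2
    omega
  have htne : (t : K) ^ r ≠ 0 := pow_ne_zero _ t_ne_zero
  have hm1 : ((-1 : K)) ^ ((AddSet μ).filter (fun ρ => r < ρ)).card ≠ 0 :=
    pow_ne_zero _ (by norm_num)
  field_simp
set_option maxHeartbeats 2000000 in
open scoped Classical in
theorem KI (μ : YoungDiagram) :
    ∑ r ∈ AddSet μ, t ^ r * alph μ (addCell μ r) = 1 := by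
  classical
  have hfinj : Function.Injective (fun ρ : ℕ => node (μ.rowLen ρ) ρ) := by
    intro x y hxy
    exact (node_inj hxy).2
  have hcard : Multiset.card ((RemSet μ).val.map (fun y => node (μ.rowLen y) (y + 1))) + 1
      = ((AddSet μ).image (fun ρ => node (μ.rowLen ρ) ρ)).card := by
    rw [Finset.card_image_of_injective _ hfinj, Multiset.card_map, card_AddSet]
    rfl
  have hB0 : ∀ b ∈ (RemSet μ).val.map (fun y => node (μ.rowLen y) (y + 1)), b ≠ (0:K) := by
    intro b hb
    rw [Multiset.mem_map] at hb
    obtain ⟨y, _, rfl⟩ := hb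
    exact node_ne_zero _ _
  have hlag := lagrange_key ((AddSet μ).image (fun ρ => node (μ.rowLen ρ) ρ))
    ((RemSet μ).val.map (fun y => node (μ.rowLen y) (y + 1))) hcard hB0
  rw [Finset.sum_image (fun x _ y _ hxy => hfinj hxy)] at hlag
  rw [← hlag]
  apply Finset.sum_congr rfl
  intro r hr
  rw [talph (mem_AddSet.mp hr)]
  have himg : ((AddSet μ).image (fun ρ => node (μ.rowLen ρ) ρ)).erase (node (μ.rowLen r) r)
      = ((AddSet μ).erase r).image (fun ρ => node (μ.rowLen ρ) ρ) :=
    (Finset.image_erase hfinj (AddSet μ) r).symm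
  have hBmap : ((RemSet μ).val.map (fun y => node (μ.rowLen y) (y + 1))).map
        (fun b => node (μ.rowLen r) r - b)
      = (RemSet μ).val.map (fun y => node (μ.rowLen r) r - node (μ.rowLen y) (y + 1)) := by
    rw [Multiset.map_map]
    rfl
  rw [himg, Finset.prod_image (fun x _ y _ hxy => hfinj hxy),
    Finset.prod_image (fun x _ y _ hxy => hfinj hxy), hBmap]
  rfl
open scoped Classical in
theorem nstat_addCell {μ : YoungDiagram} {r : ℕ} (h : Addable μ r) :
    nstat (addCell μ r) = nstat μ + r := by
  classical
  rw [nstat, cells_addCell h,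
    Finset.sum_insert (by rw [YoungDiagram.mem_cells]; exact corner_not_mem μ r)]
  have hc1 : (addCell μ r).colLen (μ.rowLen r) = r + 1 := by
    rw [colLen_addCell h, if_pos rfl]
  have h0 : leg (addCell μ r) (r, μ.rowLen r) = 0 := by
    simp only [leg, hc1]
    omega
  rw [h0]
  have hsum : ∑ x ∈ μ.cells, (leg (addCell μ r) x : ℤ)
      = ∑ x ∈ μ.cells, ((leg μ x : ℤ) + if x.2 = μ.rowLen r then 1 else 0) := by
    apply Finset.sum_congr rfl
    intro x hx
    obtain ⟨i, j⟩ := x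
    rw [YoungDiagram.mem_cells] at hx
    by_cases hj : j = μ.rowLen r
    · subst hj
      rw [if_pos rfl]
      have hi : i < μ.colLen (μ.rowLen r) := (lt_colLen_iff μ).mpr hx
      rw [colLen_rowLen_of_addable h] at hi
      simp only [leg, hc1, colLen_rowLen_of_addable h]
      omega
    · rw [if_neg hj]
      simp only [leg, colLen_addCell h, if_neg hj]
      omega
  rw [hsum, Finset.sum_add_distrib]
  have hcnt : (∑ x ∈ μ.cells, if x.2 = μ.rowLen r then (1:ℤ) else 0) = r := by
    rw [Finset.sum_boole]
    have hfil : μ.cells.filter (fun x => x.2 = μ.rowLen r) = μ.col (μ.rowLen r) := by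
      ext x
      rw [Finset.mem_filter, YoungDiagram.mem_col_iff, YoungDiagram.mem_cells]
    rw [hfil, ← YoungDiagram.colLen_eq_card, colLen_rowLen_of_addable h]
  rw [hcnt, nstat]
  push_cast
  ring
theorem chain_cards {n : ℕ} {l : YoungDiagram} {P : ℕ → YoungDiagram} (hP : IsSYTChain n l P) :
    ∀ i, i ≤ n → (P i).cells.card = i := by
  intro i
  induction i with
  | zero => intro _; rw [hP.1]; rfl
  | succ k ih =>
      intro hk
      have hcov := hP.2.1 k (by omega)
      rw [hcov.2, ih (by omega)]

theorem rowLen_le_card (μ : YoungDiagram) (i : ℕ) : μ.rowLen i ≤ μ.cells.card := by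
  rw [YoungDiagram.rowLen_eq_card]
  apply Finset.card_le_card
  intro x hx
  rw [YoungDiagram.mem_row_iff] at hx
  rw [YoungDiagram.mem_cells]
  exact hx.1

theorem colLen_le_card (μ : YoungDiagram) (j : ℕ) : μ.colLen j ≤ μ.cells.card := by
  rw [YoungDiagram.colLen_eq_card]
  apply Finset.card_le_card
  intro x hx
  rw [YoungDiagram.mem_col_iff] at hx
  rw [YoungDiagram.mem_cells]
  exact hx.1

theorem finite_partitions (n : ℕ) : {l : YoungDiagram | l.cells.card = n}.Finite := by
  classical
  apply Set.Finite.of_finite_image (f := fun l : YoungDiagram => l.cells) ?_ ?_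
  · apply Set.Finite.subset ((Finset.range n ×ˢ Finset.range n).powerset).finite_toSet
    rintro s ⟨l, hl, rfl⟩
    simp only [Set.mem_setOf_eq] at hl
    rw [Finset.mem_coe, Finset.mem_powerset]
    intro x hx
    obtain ⟨i, j⟩ := x
    rw [Finset.mem_product, Finset.mem_range, Finset.mem_range]
    rw [YoungDiagram.mem_cells] at hx
    constructor
    · have h1 : i < l.colLen j := (lt_colLen_iff l).mpr hx
      have h2 := colLen_le_card l j
      omega
    · have h1 : j < l.rowLen i := (lt_rowLen_iff l).mpr hx
      have h2 := rowLen_le_card l i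
      omega
  · intro l1 _ l2 _ he
    exact YoungDiagram.ext he

theorem finite_card_le (n : ℕ) : {l : YoungDiagram | l.cells.card ≤ n}.Finite := by
  apply Set.Finite.subset (Set.Finite.biUnion (Set.finite_Iic n)
    (fun k _ => finite_partitions k))
  intro l hl
  simp only [Set.mem_setOf_eq] at hl
  exact Set.mem_biUnion hl rfl

theorem finite_chains (n : ℕ) (l : YoungDiagram) :
    {P : ℕ → YoungDiagram | IsSYTChain n l P}.Finite := by
  classical
  apply Set.Finite.of_finite_image (f := fun (P : ℕ → YoungDiagram) (i : Fin (n+1)) => P i) ?_ ?_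
  · apply Set.Finite.subset (Set.Finite.pi (fun _ : Fin (n+1) => finite_card_le n))
    rintro f ⟨P, hP, rfl⟩
    rw [Set.mem_pi]
    intro i _
    simp only [Set.mem_setOf_eq]
    rw [chain_cards hP i.1 (Nat.lt_succ_iff.mp i.2)]
    exact Nat.lt_succ_iff.mp i.2
  · intro P1 h1 P2 h2 he
    simp only [Set.mem_setOf_eq] at h1 h2
    funext i
    rcases le_or_gt i n with hi | hi
    · exact congrFun he ⟨i, by omega⟩
    · rw [h1.2.2 i (by omega), h2.2.2 i (by omega)]

/-- Truncation of a chain at time `n`. -/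
def truncC (n : ℕ) (P : ℕ → YoungDiagram) : ℕ → YoungDiagram := fun i => if i ≤ n then P i else P n

/-- Extension of a chain by one diagram. -/
def extC (n : ℕ) (P : ℕ → YoungDiagram) (l : YoungDiagram) : ℕ → YoungDiagram :=
  fun i => if i ≤ n then P i else l

/-- The row of the unique cell of `l \ μ` (when `μ ⋖ l`). -/
def diffRow (μ l : YoungDiagram) : ℕ := ((l.cells \ μ.cells).image Prod.fst).sum id

theorem diffRow_addCell {μ : YoungDiagram} {r : ℕ} (h : Addable μ r) :
    diffRow μ (addCell μ r) = r := by
  rw [diffRow, sdiff_addCell h]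
  simp

theorem chain_trunc {n : ℕ} {l : YoungDiagram} {P : ℕ → YoungDiagram}
    (hP : IsSYTChain (n+1) l P) : IsSYTChain n (P n) (truncC n P) := by
  refine ⟨?_, ?_, ?_⟩
  · show (if 0 ≤ n then P 0 else P n).cells = ∅
    rw [if_pos (Nat.zero_le n)]
    exact hP.1
  · intro i hi
    have h1 : truncC n P i = P i := by
      show (if i ≤ n then P i else P n) = P i
      rw [if_pos (by omega)]
    have h2 : truncC n P (i+1) = P (i+1) := by
      show (if i + 1 ≤ n then P (i+1) else P n) = P (i+1)
      rw [if_pos (by omega)]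
    rw [h1, h2]
    exact hP.2.1 i (by omega)
  · intro i hi
    show (if i ≤ n then P i else P n) = P n
    rcases Nat.lt_or_ge n i with h' | h'
    · rw [if_neg (by omega)]
    · have hieq : i = n := by omega
      rw [hieq, if_pos (le_refl n)]

theorem chain_ext {n : ℕ} {μ : YoungDiagram} {P : ℕ → YoungDiagram} {r : ℕ}
    (hP : IsSYTChain n μ P) (hr : Addable μ r) :
    IsSYTChain (n+1) (addCell μ r) (extC n P (addCell μ r)) := by
  refine ⟨?_, ?_, ?_⟩
  · show (if 0 ≤ n then P 0 else addCell μ r).cells = ∅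
    rw [if_pos (Nat.zero_le n)]
    exact hP.1
  · intro i hi
    rcases Nat.lt_or_ge i n with h' | h'
    · have h1 : extC n P (addCell μ r) i = P i := by
        show (if i ≤ n then P i else _) = P i
        rw [if_pos (by omega)]
      have h2 : extC n P (addCell μ r) (i+1) = P (i+1) := by
        show (if i + 1 ≤ n then P (i+1) else _) = P (i+1)
        rw [if_pos (by omega)]
      rw [h1, h2]
      exact hP.2.1 i h'
    · have hieq : i = n := by omega
      have h1 : extC n P (addCell μ r) i = P i := by
        show (if i ≤ n then P i else _) = P i
        rw [if_pos (by omega)]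
      have h2 : extC n P (addCell μ r) (i+1) = addCell μ r := by
        show (if i + 1 ≤ n then P (i+1) else addCell μ r) = addCell μ r
        rw [if_neg (by omega)]
      rw [h1, h2, hieq, hP.2.2 n (le_refl n)]
      exact covers_addCell hr
  · intro i hi
    show (if i ≤ n then P i else addCell μ r) = addCell μ r
    rw [if_neg (by omega)]

open scoped Classical in
theorem step_sum (n : ℕ) :
    (∑ l ∈ (finite_partitions (n+1)).toFinset, ∑ P ∈ (finite_chains (n+1) l).toFinset,
        t ^ nstat l * ∏ i ∈ Finset.range (n+1), alph (P i) (P (i+1)))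
    = ∑ l ∈ (finite_partitions n).toFinset, ∑ P ∈ (finite_chains n l).toFinset,
        t ^ nstat l * ∏ i ∈ Finset.range n, alph (P i) (P (i+1)) := by
  classical
  rw [Finset.sum_sigma' ((finite_partitions (n+1)).toFinset)
      (fun l => (finite_chains (n+1) l).toFinset)
      (fun l P => t ^ nstat l * ∏ i ∈ Finset.range (n+1), alph (P i) (P (i+1)))]
  rw [Finset.sum_sigma' ((finite_partitions n).toFinset)
      (fun l => (finite_chains n l).toFinset)
      (fun l P => t ^ nstat l * ∏ i ∈ Finset.range n, alph (P i) (P (i+1)))]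
  have hRHS : (∑ x ∈ ((finite_partitions n).toFinset.sigma
        (fun l => (finite_chains n l).toFinset)),
        t ^ nstat x.1 * ∏ i ∈ Finset.range n, alph (x.2 i) (x.2 (i+1)))
      = ∑ y ∈ ((finite_partitions n).toFinset.sigma
          (fun l => (finite_chains n l).toFinset)).sigma (fun x => AddSet x.1),
          (t ^ y.2 * alph y.1.1 (addCell y.1.1 y.2)) *
            (t ^ nstat y.1.1 * ∏ i ∈ Finset.range n, alph (y.1.2 i) (y.1.2 (i+1))) := by
    rw [← Finset.sum_sigma' (((finite_partitions n).toFinset.sigma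
        (fun l => (finite_chains n l).toFinset))) (fun x => AddSet x.1)
        (fun x r => (t ^ r * alph x.1 (addCell x.1 r)) *
          (t ^ nstat x.1 * ∏ i ∈ Finset.range n, alph (x.2 i) (x.2 (i+1))))]
    apply Finset.sum_congr rfl
    intro x _
    rw [← Finset.sum_mul, KI x.1, one_mul]
  rw [hRHS]
  refine (Finset.sum_nbij'
    (fun a => (⟨addCell a.1.1 a.2, extC n a.1.2 (addCell a.1.1 a.2)⟩ :
        (_ : YoungDiagram) × (ℕ → YoungDiagram)))
    (fun b => (⟨⟨b.2 n, truncC n b.2⟩, diffRow (b.2 n) (b.2 (n+1))⟩ :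
        (_ : (_ : YoungDiagram) × (ℕ → YoungDiagram)) × ℕ))
    ?_ ?_ ?_ ?_ ?_).symm
  · -- Ψ maps triples into Σ(n+1)
    rintro ⟨⟨μ, P⟩, r⟩ ha
    rw [Finset.mem_sigma] at ha
    obtain ⟨hx, hr⟩ := ha
    rw [Finset.mem_sigma, Set.Finite.mem_toFinset, Set.Finite.mem_toFinset] at hx
    rw [mem_AddSet] at hr
    obtain ⟨hμ, hP⟩ := hx
    rw [Finset.mem_sigma, Set.Finite.mem_toFinset, Set.Finite.mem_toFinset]
    constructor
    · simp only [Set.mem_setOf_eq] at hμ ⊢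
      rw [card_addCell hr, hμ]
    · exact chain_ext hP hr
  · -- Φ maps Σ(n+1) into triples
    rintro ⟨l, P⟩ hb
    rw [Finset.mem_sigma, Set.Finite.mem_toFinset, Set.Finite.mem_toFinset] at hb
    obtain ⟨hl, hP⟩ := hb
    simp only [Set.mem_setOf_eq] at hl hP
    rw [Finset.mem_sigma, Finset.mem_sigma, Set.Finite.mem_toFinset, Set.Finite.mem_toFinset]
    obtain ⟨r0, hr0, heq⟩ := covers_iff.mp (hP.2.1 n (by omega))
    refine ⟨⟨?_, ?_⟩, ?_⟩
    · simp only [Set.mem_setOf_eq]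
      exact chain_cards hP n (by omega)
    · exact chain_trunc hP
    · show diffRow (P n) (P (n+1)) ∈ AddSet (P n)
      rw [heq, diffRow_addCell hr0]
      exact mem_AddSet.mpr hr0
  · -- left inverse
    rintro ⟨⟨μ, P⟩, r⟩ ha
    rw [Finset.mem_sigma] at ha
    obtain ⟨hx, hr⟩ := ha
    rw [Finset.mem_sigma, Set.Finite.mem_toFinset, Set.Finite.mem_toFinset] at hx
    rw [mem_AddSet] at hr
    obtain ⟨hμ, hP⟩ := hx
    simp only [Set.mem_setOf_eq] at hμ hP
    have e1 : extC n P (addCell μ r) n = μ := by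
      show (if n ≤ n then P n else _) = μ
      rw [if_pos (le_refl n)]
      exact hP.2.2 n (le_refl n)
    have e4 : extC n P (addCell μ r) (n+1) = addCell μ r := by
      show (if n + 1 ≤ n then P (n+1) else addCell μ r) = addCell μ r
      rw [if_neg (by omega)]
    have e2 : truncC n (extC n P (addCell μ r)) = P := by
      funext i
      rcases le_or_gt i n with hi | hi
      · show (if i ≤ n then extC n P (addCell μ r) i else _) = P i
        rw [if_pos hi]
        show (if i ≤ n then P i else _) = P i
        rw [if_pos hi]
      · show (if i ≤ n then _ else extC n P (addCell μ r) n) = P i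
        rw [if_neg (by omega), e1, hP.2.2 i (by omega)]
    show (⟨⟨extC n P (addCell μ r) n, truncC n (extC n P (addCell μ r))⟩,
        diffRow (extC n P (addCell μ r) n) (extC n P (addCell μ r) (n+1))⟩ :
        (_ : (_ : YoungDiagram) × (ℕ → YoungDiagram)) × ℕ) = ⟨⟨μ, P⟩, r⟩
    rw [e2, e1, e4, diffRow_addCell hr]
  · -- right inverse
    rintro ⟨l, P⟩ hb
    rw [Finset.mem_sigma, Set.Finite.mem_toFinset, Set.Finite.mem_toFinset] at hb
    obtain ⟨hl, hP⟩ := hb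
    simp only [Set.mem_setOf_eq] at hl hP
    obtain ⟨r0, hr0, heq⟩ := covers_iff.mp (hP.2.1 n (by omega))
    have e3 : diffRow (P n) (P (n+1)) = r0 := by
      rw [heq, diffRow_addCell hr0]
    have e5 : addCell (P n) r0 = l := by
      rw [← heq]
      exact hP.2.2 (n+1) (le_refl (n+1))
    have e6 : extC n (truncC n P) (addCell (P n) r0) = P := by
      funext i
      rcases le_or_gt i n with hi | hi
      · show (if i ≤ n then truncC n P i else _) = P i
        rw [if_pos hi]
        show (if i ≤ n then P i else _) = P i
        rw [if_pos hi]
      · show (if i ≤ n then _ else addCell (P n) r0) = P i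
        rw [if_neg (by omega), e5, hP.2.2 i (by omega)]
    show (⟨addCell (P n) (diffRow (P n) (P (n+1))),
        extC n (truncC n P) (addCell (P n) (diffRow (P n) (P (n+1))))⟩ :
        (_ : YoungDiagram) × (ℕ → YoungDiagram)) = ⟨l, P⟩
    rw [e3, e6, e5]
  · -- value equality
    rintro ⟨⟨μ, P⟩, r⟩ ha
    rw [Finset.mem_sigma] at ha
    obtain ⟨hx, hr⟩ := ha
    rw [Finset.mem_sigma, Set.Finite.mem_toFinset, Set.Finite.mem_toFinset] at hx
    rw [mem_AddSet] at hr
    obtain ⟨hμ, hP⟩ := hx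
    simp only [Set.mem_setOf_eq] at hμ hP
    show (t ^ r * alph μ (addCell μ r)) * (t ^ nstat μ * ∏ i ∈ Finset.range n, alph (P i) (P (i+1)))
      = t ^ nstat (addCell μ r) * ∏ i ∈ Finset.range (n+1),
          alph (extC n P (addCell μ r) i) (extC n P (addCell μ r) (i+1))
    have hv : ∀ i ≤ n, extC n P (addCell μ r) i = P i := by
      intro i hi
      show (if i ≤ n then P i else _) = P i
      rw [if_pos hi]
    have hv2 : extC n P (addCell μ r) (n+1) = addCell μ r := by
      show (if n + 1 ≤ n then P (n+1) else addCell μ r) = addCell μ r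
      rw [if_neg (by omega)]
    have hpr : ∏ i ∈ Finset.range n,
        alph (extC n P (addCell μ r) i) (extC n P (addCell μ r) (i+1))
        = ∏ i ∈ Finset.range n, alph (P i) (P (i+1)) := by
      apply Finset.prod_congr rfl
      intro i hi
      have hin := Finset.mem_range.mp hi
      rw [hv i (by omega), hv (i+1) (by omega)]
    rw [Finset.prod_range_succ, hv n (le_refl n), hv2, hP.2.2 n (le_refl n), hpr]
    rw [nstat_addCell hr, zpow_add₀ t_ne_zero, zpow_natCast]
    ring

theorem main_fin (n : ℕ) :
    (∑ l ∈ (finite_partitions n).toFinset, ∑ P ∈ (finite_chains n l).toFinset,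
        t ^ nstat l * ∏ i ∈ Finset.range n, alph (P i) (P (i+1))) = 1 := by
  induction n with
  | zero =>
      have h1 : (finite_partitions 0).toFinset = {⊥} := by
        ext l
        rw [Set.Finite.mem_toFinset, Finset.mem_singleton]
        simp only [Set.mem_setOf_eq]
        constructor
        · intro hc
          apply YoungDiagram.ext
          rw [YoungDiagram.cells_bot, ← Finset.card_eq_zero]
          exact hc
        · rintro rfl
          rw [YoungDiagram.cells_bot]
          rfl
      have h2 : (finite_chains 0 ⊥).toFinset = {fun _ => (⊥ : YoungDiagram)} := by
        ext P
        rw [Set.Finite.mem_toFinset, Finset.mem_singleton]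
        simp only [Set.mem_setOf_eq]
        constructor
        · intro hP
          funext i
          exact hP.2.2 i (Nat.zero_le i)
        · rintro rfl
          exact ⟨YoungDiagram.cells_bot, fun i hi => absurd hi (by omega), fun i _ => rfl⟩
      rw [h1, Finset.sum_singleton, h2, Finset.sum_singleton]
      have h3 : nstat ⊥ = 0 := by
        rw [nstat, YoungDiagram.cells_bot, Finset.sum_empty]
      rw [h3, Finset.range_zero, Finset.prod_empty, zpow_zero, mul_one]
  | succ k ih =>
      rw [step_sum k]
      exact ih

theorem qPlancherel_total_mass' (n : ℕ) :
    ∑ᶠ l ∈ {l : YoungDiagram | l.cells.card = n},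
        ∑ᶠ P ∈ {P : ℕ → YoungDiagram | IsSYTChain n l P},
          t ^ (nstat l) * ∏ i ∈ Finset.range n, alph (P i) (P (i + 1)) = 1 := by
  have hinner : ∀ l : YoungDiagram,
      (∑ᶠ P ∈ {P : ℕ → YoungDiagram | IsSYTChain n l P},
        t ^ (nstat l) * ∏ i ∈ Finset.range n, alph (P i) (P (i + 1)))
      = ∑ P ∈ (finite_chains n l).toFinset,
        t ^ nstat l * ∏ i ∈ Finset.range n, alph (P i) (P (i + 1)) := by
    intro l
    exact finsum_mem_eq_finite_toFinset_sum _ (finite_chains n l)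
  rw [finsum_mem_eq_finite_toFinset_sum _ (finite_partitions n)]
  have hcg := Finset.sum_congr rfl (fun l (_ : l ∈ (finite_partitions n).toFinset) => hinner l)
  exact hcg.trans (main_fin n)

/-- For every `n ≥ 0`:
`∑_{λ ⊢ n} ∑_{P ∈ SYT(λ)} t^{n(λ)} ∏_{i=1}^{n} α_{P^{(i)}/P^{(i−1)}}(q,t) = 1` in `ℚ(q,t)`. -/
theorem qPlancherel_total_mass (n : ℕ) :
    ∑ᶠ l ∈ {l : YoungDiagram | l.cells.card = n},
        ∑ᶠ P ∈ {P : ℕ → YoungDiagram | IsSYTChain n l P},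
          t ^ (nstat l) * ∏ i ∈ Finset.range n, alph (P i) (P (i + 1)) = 1 := by
  exact qPlancherel_total_mass' n

end
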